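/- For all real numbers μ > ν ≥ 0, (1/√π)·∫_{−∞}^{+∞} max{(2ν+1)^{−1/2}·e^{−x²/(2ν+1)} − (2μ+1)^{−1/2}·e^{−x²/(2μ+1)}, 0} dx = erf(√((2μ+1)/(4(μ−ν)) · ln((2μ+1)/(2ν+1)))) − erf(√((2ν+1)/(4(μ−ν)) · ln((2μ+1)/(2ν+1)))). -/

import Mathlib

open MeasureTheory Real

/-- The error function `erf(z) = (2/√π)·∫₀^z e^{−u²} du`. -/
noncomputable def erf (z : ℝ) : ℝ := (2 / Real.sqrt π) * ∫ u in (0 : ℝ)..z, Real.exp (-u ^ 2)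

lemma gauss_piece (c : ℝ) (hc : 0 < c) (z : ℝ) :
    ∫ x in (-z)..z, c ^ (-(1:ℝ)/2) * Real.exp (-x ^ 2 / c)
      = Real.sqrt π * erf (z / Real.sqrt c) := by
  have hsc : (0:ℝ) < Real.sqrt c := Real.sqrt_pos.mpr hc
  have hpi : (0:ℝ) < Real.sqrt π := Real.sqrt_pos.mpr Real.pi_pos
  have h1 : ∀ x : ℝ, Real.exp (-x ^ 2 / c) = Real.exp (-(x / Real.sqrt c) ^ 2) := by
    intro x
    rw [div_pow, Real.sq_sqrt hc.le, neg_div]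
  have h2 : ∫ x in (-z)..z, Real.exp (-x ^ 2 / c)
      = Real.sqrt c * ∫ u in (-(z / Real.sqrt c))..(z / Real.sqrt c), Real.exp (-u ^ 2) := by
    simp_rw [h1]
    rw [intervalIntegral.integral_comp_div (fun u => Real.exp (-u ^ 2)) hsc.ne']
    rw [neg_div, smul_eq_mul]
  have h3 : ∫ u in (-(z / Real.sqrt c))..(z / Real.sqrt c), Real.exp (-u ^ 2)
      = 2 * ∫ u in (0:ℝ)..(z / Real.sqrt c), Real.exp (-u ^ 2) := by
    set w := z / Real.sqrt c
    have hint : ∀ a b : ℝ, IntervalIntegrable (fun u => Real.exp (-u ^ 2)) volume a b :=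
      fun a b => (Continuous.intervalIntegrable (by fun_prop) a b)
    have hadd := intervalIntegral.integral_add_adjacent_intervals (hint (-w) 0) (hint 0 w)
    rw [← hadd]
    have hneg : ∫ u in (-w)..(0:ℝ), Real.exp (-u ^ 2) = ∫ u in (0:ℝ)..w, Real.exp (-u ^ 2) := by
      have := intervalIntegral.integral_comp_neg (fun u => Real.exp (-u ^ 2)) (a := 0) (b := w)
      simp only [neg_zero, neg_neg, neg_sq] at this ⊢
      rw [← this]
    rw [hneg]; ring
  rw [intervalIntegral.integral_const_mul, h2, h3, erf]
  have hc12 : c ^ (-(1:ℝ)/2) = (Real.sqrt c)⁻¹ := by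
    rw [show (-(1:ℝ)/2) = -(1/2) by ring, Real.rpow_neg hc.le, Real.sqrt_eq_rpow]
  rw [hc12]
  field_simp

lemma key (a b : ℝ) (ha : 0 < a) (hab : a < b) :
    (1 / Real.sqrt π) * ∫ x : ℝ,
        max (a ^ (-(1:ℝ)/2) * Real.exp (-x ^ 2 / a) - b ^ (-(1:ℝ)/2) * Real.exp (-x ^ 2 / b)) 0
      = erf (Real.sqrt (b * Real.log (b / a) / (2 * (b - a))))
        - erf (Real.sqrt (a * Real.log (b / a) / (2 * (b - a)))) := by
  have hb : (0:ℝ) < b := ha.trans hab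
  have hba : (0:ℝ) < b - a := by linarith
  have hL : 0 < Real.log (b / a) := Real.log_pos (by rw [lt_div_iff₀ ha]; linarith)
  set L := Real.log (b / a) with hLdef
  have hLab : L = Real.log b - Real.log a := Real.log_div hb.ne' ha.ne'
  have hs0 : 0 ≤ a * b * L / (2 * (b - a)) := by positivity
  set x₀ : ℝ := Real.sqrt (a * b * L / (2 * (b - a))) with hx0
  have hx0sq : x₀ ^ 2 = a * b * L / (2 * (b - a)) := Real.sq_sqrt hs0
  have hx00 : 0 ≤ x₀ := Real.sqrt_nonneg _
  set f : ℝ → ℝ := fun x =>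
    a ^ (-(1:ℝ)/2) * Real.exp (-x ^ 2 / a) - b ^ (-(1:ℝ)/2) * Real.exp (-x ^ 2 / b) with hf
  have hrw : ∀ (c : ℝ), 0 < c → ∀ x : ℝ,
      c ^ (-(1:ℝ)/2) * Real.exp (-x ^ 2 / c) = Real.exp (-(Real.log c) / 2 + -x ^ 2 / c) := by
    intro c hc x
    rw [Real.rpow_def_of_pos hc, ← Real.exp_add]
    ring_nf
  have hiff : ∀ x : ℝ, 0 ≤ f x ↔ x ^ 2 ≤ x₀ ^ 2 := by
    intro x
    rw [hf]
    simp only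
    rw [hrw a ha x, hrw b hb x, sub_nonneg, Real.exp_le_exp, hx0sq, hLab,
      le_div_iff₀ (by positivity)]
    rw [div_add_div _ _ two_ne_zero hb.ne', div_add_div _ _ two_ne_zero ha.ne',
      div_le_div_iff₀ (by positivity) (by positivity)]
    constructor <;> intro h <;> nlinarith [h]
  have hmaxx : ∀ x : ℝ,
      max (a ^ (-(1:ℝ)/2) * Real.exp (-x ^ 2 / a) - b ^ (-(1:ℝ)/2) * Real.exp (-x ^ 2 / b)) 0
        = (Set.Icc (-x₀) x₀).indicator f x := by
    intro x
    have hfx : max (f x) 0 = (Set.Icc (-x₀) x₀).indicator f x := by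
      rcases le_or_gt (x ^ 2) (x₀ ^ 2) with h | h
      · have hm : x ∈ Set.Icc (-x₀) x₀ := by
          rw [Set.mem_Icc]; constructor <;> nlinarith
        rw [Set.indicator_of_mem hm, max_eq_left ((hiff x).mpr h)]
      · have hm : x ∉ Set.Icc (-x₀) x₀ := by
          rw [Set.mem_Icc]; rintro ⟨h1, h2⟩; nlinarith
        rw [Set.indicator_of_notMem hm]
        have hneg : ¬ (0 ≤ f x) := fun h0 => absurd ((hiff x).mp h0) (not_le.mpr h)
        exact max_eq_right (le_of_not_ge hneg)
    exact hfx
  simp only [hmaxx]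
  rw [MeasureTheory.integral_indicator measurableSet_Icc,
    MeasureTheory.integral_Icc_eq_integral_Ioc,
    ← intervalIntegral.integral_of_le (by linarith : -x₀ ≤ x₀)]
  have hia : IntervalIntegrable (fun x => a ^ (-(1:ℝ)/2) * Real.exp (-x ^ 2 / a)) volume (-x₀) x₀ :=
    Continuous.intervalIntegrable (by fun_prop) _ _
  have hib : IntervalIntegrable (fun x => b ^ (-(1:ℝ)/2) * Real.exp (-x ^ 2 / b)) volume (-x₀) x₀ :=
    Continuous.intervalIntegrable (by fun_prop) _ _
  rw [hf, intervalIntegral.integral_sub hia hib, gauss_piece a ha, gauss_piece b hb]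
  have hpi : (0:ℝ) < Real.sqrt π := Real.sqrt_pos.mpr Real.pi_pos
  have hza : x₀ / Real.sqrt a = Real.sqrt (b * L / (2 * (b - a))) := by
    rw [hx0, ← Real.sqrt_div hs0]
    congr 1
    field_simp
  have hzb : x₀ / Real.sqrt b = Real.sqrt (a * L / (2 * (b - a))) := by
    rw [hx0, ← Real.sqrt_div hs0]
    congr 1
    field_simp
  rw [hza, hzb]
  field_simp

/-- For `μ > ν ≥ 0`,
`(1/√π)·∫_ℝ max{(2ν+1)^{−1/2}·e^{−x²/(2ν+1)} − (2μ+1)^{−1/2}·e^{−x²/(2μ+1)}, 0} dx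
  = erf(√((2μ+1)/(4(μ−ν))·ln((2μ+1)/(2ν+1)))) − erf(√((2ν+1)/(4(μ−ν))·ln((2μ+1)/(2ν+1))))`. -/
theorem stmt_8 (ν μ : ℝ) (hν : 0 ≤ ν) (hμν : ν < μ) :
    (1 / Real.sqrt π) * ∫ x : ℝ,
        max ((2 * ν + 1) ^ (-(1 : ℝ) / 2) * Real.exp (-x ^ 2 / (2 * ν + 1))
          - (2 * μ + 1) ^ (-(1 : ℝ) / 2) * Real.exp (-x ^ 2 / (2 * μ + 1))) 0
      = erf (Real.sqrt ((2 * μ + 1) / (4 * (μ - ν)) * Real.log ((2 * μ + 1) / (2 * ν + 1))))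
        - erf (Real.sqrt ((2 * ν + 1) / (4 * (μ - ν)) * Real.log ((2 * μ + 1) / (2 * ν + 1)))) := by
  rw [key (2 * ν + 1) (2 * μ + 1) (by linarith) (by linarith)]
  congr 3
  · rw [show (2:ℝ) * ((2 * μ + 1) - (2 * ν + 1)) = 4 * (μ - ν) by ring]; ring
  · rw [show (2:ℝ) * ((2 * μ + 1) - (2 * ν + 1)) = 4 * (μ - ν) by ring]; ring
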